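/- arXiv:0808.0753 — 2 statements merged into one kernel-verified Lean document; each statement's English description precedes it below -/
import Mathlib

section
/- The run-length encoding of the binary digits of a positive natural number, together with the convention that the most significant bit is 1 and runs alternate, yields a bijection between positive natural numbers and nonempty lists of natural numbers (each run length recorded minus 1): rle2nat (nat2rle n) = n for all n, and nat2rle (rle2nat ls) = ls for all lists ls. -/
def bits2rle : List Bool → List ℕ
  | [] => []
  | [_] => [0]
  | x :: y :: xs =>
    if x = y then
      match bits2rle (y :: xs) with
      | c :: cs => (c + 1) :: cs
      | [] => []
    else 0 :: bits2rle (y :: xs)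

def rle2bits : List ℕ → List Bool
  | [] => []
  | n :: ns =>
    let xs := rle2bits ns
    List.replicate (n + 1) (match xs with | [] => true | b :: _ => !b) ++ xs

def fromBits : List Bool → ℕ
  | [] => 0
  | b :: bs => (if b then 1 else 0) + 2 * fromBits bs

def nat2rle (n : ℕ) : List ℕ := bits2rle n.bits

def rle2nat (ls : List ℕ) : ℕ := fromBits (rle2bits ls)

lemma fromBits_cons (b : Bool) (bs : List Bool) :
    fromBits (b :: bs) = Nat.bit b (fromBits bs) := by
  cases b <;> simp [fromBits, Nat.bit] <;> ring

lemma fromBits_bits (n : ℕ) : fromBits n.bits = n := by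
  induction n using Nat.binaryRec' with
  | zero => simp [fromBits]
  | bit b n h ih => rw [Nat.bits_append_bit _ _ h, fromBits_cons, ih]

lemma bits_fromBits : ∀ bs : List Bool, bs.getLast? = some true →
    (fromBits bs).bits = bs := by
  intro bs
  induction bs with
  | nil => simp
  | cons b bs ih =>
    intro h
    rw [fromBits_cons]
    cases bs with
    | nil =>
      simp at h
      subst h
      simp [fromBits, Nat.bit]
    | cons c cs =>
      rw [List.getLast?_cons_cons] at h
      have h2 := ih h
      rw [Nat.bits_append_bit, h2]
      intro h0
      rw [h0] at h2
      simp at h2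

lemma bits_getLast (n : ℕ) (hn : 1 ≤ n) : n.bits.getLast? = some true := by
  induction n using Nat.binaryRec' with
  | zero => omega
  | bit b n h ih =>
    rw [Nat.bits_append_bit _ _ h]
    rcases Nat.eq_zero_or_pos n with h0 | h0
    · subst h0; rw [h rfl]; simp
    · have := ih h0
      rcases List.eq_nil_or_concat n.bits with he | ⟨l, x, he⟩
      · rw [he] at this; simp at this
      · have hx : x = true := by rw [he] at this; simpa using this
        rw [he, List.concat_eq_append, show b :: (l ++ [x]) = (b :: l) ++ [x] by simp,
          List.getLast?_concat, hx]

lemma bits2rle_ne_nil : ∀ (b : Bool) (bs : List Bool), bits2rle (b :: bs) ≠ [] := by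
  intro b bs
  induction bs generalizing b with
  | nil => simp [bits2rle]
  | cons c cs ih =>
    rw [bits2rle]
    split
    · rcases hh : bits2rle (c :: cs) with _ | ⟨d, ds⟩
      · exact absurd hh (ih c)
      · simp
    · simp

lemma rle2bits_ne_nil (n : ℕ) (ns : List ℕ) : rle2bits (n :: ns) ≠ [] := by
  simp [rle2bits]

lemma rle2bits_getLast : ∀ ls : List ℕ, ls ≠ [] → (rle2bits ls).getLast? = some true := by
  intro ls
  induction ls with
  | nil => simp
  | cons n ns ih =>
    intro _
    rw [rle2bits]
    cases ns with
    | nil => simp [rle2bits, List.replicate_succ', List.getLast?_concat]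
    | cons m ms =>
      have h1 := ih (by simp)
      rcases List.eq_nil_or_concat (rle2bits (m :: ms)) with he | ⟨l, x, he⟩
      · exact absurd he (rle2bits_ne_nil m ms)
      · rw [List.concat_eq_append] at he
        have hx : x = true := by rw [he] at h1; simpa using h1
        rw [he, ← List.append_assoc, List.getLast?_concat, hx]

lemma bits2rle_replicate : ∀ (k : ℕ) (c : Bool) (xs : List Bool),
    (∀ y ∈ xs.head?, y ≠ c) →
    bits2rle (List.replicate (k + 1) c ++ xs) = k :: bits2rle xs := by
  intro k
  induction k with
  | zero =>
    intro c xs h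
    cases xs with
    | nil => simp [bits2rle]
    | cons y ys =>
      have hy : y ≠ c := h y (by simp)
      simp only [List.replicate, List.cons_append, List.nil_append]
      rw [bits2rle]
      rw [if_neg (by simpa using fun h' => hy h'.symm)]
  | succ k ih =>
    intro c xs h
    have : List.replicate (k + 1 + 1) c ++ xs = c :: (List.replicate (k + 1) c ++ xs) := by
      simp [List.replicate_succ]
    rw [this]
    have hrest : List.replicate (k + 1) c ++ xs = c :: (List.replicate k c ++ xs) := by
      simp [List.replicate_succ]
    rw [hrest, bits2rle, if_pos rfl, ← hrest, ih c xs h]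

lemma bits2rle_rle2bits : ∀ ls : List ℕ, bits2rle (rle2bits ls) = ls := by
  intro ls
  induction ls with
  | nil => rfl
  | cons n ns ih =>
    simp only [rle2bits]
    rw [bits2rle_replicate]
    · rw [ih]
    · intro y hy
      cases hx : rle2bits ns with
      | nil => rw [hx] at hy; simp at hy
      | cons b bs => rw [hx] at hy; simp at hy; subst hy; simp

lemma rle2bits_bits2rle : ∀ bs : List Bool, bs.getLast? = some true →
    rle2bits (bits2rle bs) = bs := by
  intro bs
  induction bs with
  | nil => simp
  | cons x bs ih =>
    intro h
    cases bs with
    | nil =>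
      simp at h
      subst h
      simp [bits2rle, rle2bits]
    | cons y xs =>
      rw [List.getLast?_cons_cons] at h
      have ih2 := ih h
      rw [bits2rle]
      by_cases hxy : x = y
      · rw [if_pos hxy]
        rcases hb : bits2rle (y :: xs) with _ | ⟨c, cs⟩
        · exact absurd hb (bits2rle_ne_nil y xs)
        · rw [hb] at ih2
          simp only [rle2bits] at ih2 ⊢
          have ih3 := ih2
          rw [List.replicate_succ, List.cons_append] at ih3
          obtain ⟨hB, -⟩ := List.cons_eq_cons.mp ih3
          rw [List.replicate_succ, List.cons_append, ih2, hB, hxy]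
      · rw [if_neg hxy]
        simp only [rle2bits]
        rw [ih2]
        have hx : (!y) = x := by
          cases x <;> cases y <;> simp_all
        simp [hx]

theorem rle_bijection :
    (∀ n : ℕ, 1 ≤ n → rle2nat (nat2rle n) = n) ∧
    (∀ ls : List ℕ, ls ≠ [] → nat2rle (rle2nat ls) = ls) := by
  constructor
  · intro n hn
    rw [rle2nat, nat2rle, rle2bits_bits2rle _ (bits_getLast n hn), fromBits_bits]
  · intro ls hls
    rw [nat2rle, rle2nat, bits_fromBits _ (rle2bits_getLast ls hls), bits2rle_rle2bits]
end

section
/- Let f : ℕ → List ℕ be a bijection between ℕ (restricted to n ≥ u) and lists of natural numbers such that every element of f(n) is strictly less than n. Then the recursively defined map unrank : ℕ → T, where T is the type of rose trees with atoms in {0,...,u-1}, given by unrank(n) = Atom n if n < u and unrank(n) = Forest (map unrank (f(n-u))) otherwise, is a well-defined bijection from ℕ to T, with inverse rank defined by rank(Atom n) = n and rank(Forest ts) = u + g(map rank ts) where g is the inverse of f. -/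
inductive T (u : ℕ) where
  | A : Fin u → T u
  | F : List (T u) → T u

def unrankAux (u : ℕ) (f : ℕ → List ℕ)
    (hlt : ∀ n : ℕ, u ≤ n → ∀ m ∈ f (n - u), m < n) : ℕ → T u
  | n =>
    if h : n < u then T.A ⟨n, h⟩
    else T.F ((f (n - u)).attach.map fun m => unrankAux u f hlt m.1)
termination_by n => n
decreasing_by exact hlt n (le_of_not_gt h) _ m.2

def rankAux (u : ℕ) (g : List ℕ → ℕ) : T u → ℕ
  | T.A a => a.val
  | T.F ts => u + g (ts.attach.map fun t => rankAux u g t.1)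
decreasing_by have := List.sizeOf_lt_of_mem t.2; simp; omega

lemma T_ind {u : ℕ} (P : T u → Prop) (hA : ∀ a, P (T.A a))
    (hF : ∀ ts, (∀ t ∈ ts, P t) → P (T.F ts)) : ∀ t, P t := by
  intro t
  induction t using T.rec (motive_2 := fun ts => ∀ t ∈ ts, P t) with
  | A a => exact hA a
  | F ts ih => exact hF ts ih
  | nil => rename_i t h; simp at h
  | cons hd tl ihh iht =>
    rename_i t h
    rcases List.mem_cons.mp h with h' | h'
    · exact h' ▸ ihh
    · exact iht t h'

theorem unrank_rank_bijective (u : ℕ) (f : ℕ → List ℕ) (g : List ℕ → ℕ)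
    (hfg : ∀ l : List ℕ, f (g l) = l) (hgf : ∀ n : ℕ, g (f n) = n)
    (hlt : ∀ n : ℕ, u ≤ n → ∀ m ∈ f (n - u), m < n) :
    ∃ (unrank : ℕ → T u) (rank : T u → ℕ),
      (∀ n : ℕ, ∀ h : n < u, unrank n = T.A ⟨n, h⟩) ∧
      (∀ n : ℕ, u ≤ n → unrank n = T.F ((f (n - u)).map unrank)) ∧
      (∀ a : Fin u, rank (T.A a) = a.val) ∧
      (∀ ts : List (T u), rank (T.F ts) = u + g (ts.map rank)) ∧
      Function.Bijective unrank ∧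
      (∀ n : ℕ, rank (unrank n) = n) ∧
      (∀ t : T u, unrank (rank t) = t) := by
  set unrank := unrankAux u f hlt with hu
  set rank := rankAux u g with hr
  have hu1 : ∀ n : ℕ, ∀ h : n < u, unrank n = T.A ⟨n, h⟩ := by
    intro n h; rw [hu, unrankAux]; simp [h]
  have hu2 : ∀ n : ℕ, u ≤ n → unrank n = T.F ((f (n - u)).map unrank) := by
    intro n h; rw [hu, unrankAux]; simp [Nat.not_lt.mpr h, List.attach_map_val]
  have hr1 : ∀ a : Fin u, rank (T.A a) = a.val := fun a => by simp [hr, rankAux]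
  have hr2 : ∀ ts : List (T u), rank (T.F ts) = u + g (ts.map rank) := by
    intro ts; rw [hr]; rw [rankAux]; simp [List.attach_map_val]
  have hru : ∀ n : ℕ, rank (unrank n) = n := by
    intro n
    induction n using Nat.strong_induction_on with
    | _ n ih =>
      by_cases h : n < u
      · rw [hu1 n h, hr1]
      · push_neg at h
        rw [hu2 n h, hr2, List.map_map]
        have : (f (n - u)).map (rank ∘ unrank) = f (n - u) := by
          conv_rhs => rw [← List.map_id (f (n - u))]
          exact List.map_congr_left fun m hm => ih m (hlt n h m hm)
        rw [this, hgf, Nat.add_sub_cancel' h]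
  have hur : ∀ t : T u, unrank (rank t) = t := by
    apply T_ind
    · intro a; rw [hr1, hu1 a.val a.isLt]
    · intro ts ih
      rw [hr2, hu2 _ (Nat.le_add_right u _), Nat.add_sub_cancel_left, hfg,
        List.map_map]
      congr 1
      conv_rhs => rw [← List.map_id ts]
      exact List.map_congr_left fun t ht => ih t ht
  exact ⟨unrank, rank, hu1, hu2, hr1, hr2,
    Function.bijective_iff_has_inverse.mpr ⟨rank, hru, hur⟩, hru, hur⟩
end
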